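/- Let N ≥ 2 be an integer, let γ > 0, ρ > 0 be reals, and let δ be a real with 0 < δ < √2·N·√((N−1)/(3N+1)). For λ > 0 set d(λ) = √(γλ)·δ, R(λ) = ρ² + (8γN² − 4d(λ)ρ(3N+1))/(λ(N+1)²) − 4d(λ)²(3N+1)/(λ²(N−1)(N+1)²), a(λ) = (d(λ)(6N+2) − λ(N+1)²(ρ − √(R(λ))))/(4N²), and h₃(λ) = −(2a(λ)(N−1) + (N−3)d(λ))/(λ(N−1)(N+1)). Then lim_{λ→0⁺} √(λ/γ)·h₃(λ) = −((N²−1)·D̄(N,δ) + (N²−N−1)δ)/((N−1)N²), and this limit is strictly negative; in particular h₃(λ) < 0 for all sufficiently small λ > 0. -/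
import Mathlib


open Filter

/-- `d(λ) = √(γλ)·δ`. -/
noncomputable def dCoef (γ δ lam : ℝ) : ℝ := Real.sqrt (γ * lam) * δ

/-- The discriminant `R(λ)` appearing in the explicit formula for `a(λ)`. -/
noncomputable def RCoef (N : ℕ) (γ ρ δ lam : ℝ) : ℝ :=
  ρ ^ 2 + (8 * γ * (N : ℝ) ^ 2 - 4 * dCoef γ δ lam * ρ * (3 * (N : ℝ) + 1))
      / (lam * ((N : ℝ) + 1) ^ 2)
    - 4 * (dCoef γ δ lam) ^ 2 * (3 * (N : ℝ) + 1)
      / (lam ^ 2 * ((N : ℝ) - 1) * ((N : ℝ) + 1) ^ 2)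

/-- The coefficient `a(λ)`. -/
noncomputable def aCoef (N : ℕ) (γ ρ δ lam : ℝ) : ℝ :=
  (dCoef γ δ lam * (6 * (N : ℝ) + 2)
      - lam * ((N : ℝ) + 1) ^ 2 * (ρ - Real.sqrt (RCoef N γ ρ δ lam)))
    / (4 * (N : ℝ) ^ 2)

/-- `h₃(λ) = −(2a(λ)(N−1) + (N−3)d(λ))/(λ(N−1)(N+1))`. -/
noncomputable def h3Coef (N : ℕ) (γ ρ δ lam : ℝ) : ℝ :=
  -(2 * aCoef N γ ρ δ lam * ((N : ℝ) - 1) + ((N : ℝ) - 3) * dCoef γ δ lam)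
    / (lam * ((N : ℝ) - 1) * ((N : ℝ) + 1))

/-- `D̄(N,y) = √((2N³ − 2N² − (3N+1)y²)/((N−1)(N+1)²))`. -/
noncomputable def Dbar (N : ℕ) (y : ℝ) : ℝ :=
  Real.sqrt ((2 * (N : ℝ) ^ 3 - 2 * (N : ℝ) ^ 2 - (3 * (N : ℝ) + 1) * y ^ 2)
    / (((N : ℝ) - 1) * ((N : ℝ) + 1) ^ 2))

/-- `√(λ/γ)·h₃(λ)` converges as `λ → 0⁺` to
`−((N²−1)·D̄(N,δ) + (N²−N−1)δ)/((N−1)N²)`, which is strictly negative; in particular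
`h₃(λ) < 0` for all sufficiently small `λ > 0`. -/
noncomputable def GCoef (N : ℕ) (γ ρ δ lam : ℝ) : ℝ :=
  lam * ρ ^ 2 / γ + 8 * (N : ℝ) ^ 2 / ((N : ℝ) + 1) ^ 2
    - 4 * Real.sqrt (lam / γ) * δ * ρ * (3 * (N : ℝ) + 1) / ((N : ℝ) + 1) ^ 2
    - 4 * δ ^ 2 * (3 * (N : ℝ) + 1) / (((N : ℝ) - 1) * ((N : ℝ) + 1) ^ 2)

lemma key (N : ℕ) (hN : 2 ≤ N) (γ ρ δ : ℝ) (hγ : 0 < γ) (lam : ℝ) (hlam : 0 < lam) :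
    Real.sqrt (lam / γ) * h3Coef N γ ρ δ lam =
    -((((N : ℝ) ^ 2 - (N : ℝ) - 1) * δ / ((N : ℝ) - 1)
        - ((N : ℝ) + 1) * (ρ * Real.sqrt (lam / γ) - Real.sqrt (GCoef N γ ρ δ lam)) / 2)
      / (N : ℝ) ^ 2) := by
  have hN2 : (2:ℝ) ≤ (N:ℝ) := by exact_mod_cast hN
  have hN0 : (N:ℝ) ≠ 0 := by nlinarith
  have hNm1 : (N:ℝ) - 1 ≠ 0 := by nlinarith
  have hNp1 : (N:ℝ) + 1 ≠ 0 := by nlinarith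
  set u := Real.sqrt (lam / γ) with hu
  have hu0 : 0 < u := Real.sqrt_pos.mpr (div_pos hlam hγ)
  have hu2 : γ * u ^ 2 = lam := by
    rw [hu, Real.sq_sqrt (le_of_lt (div_pos hlam hγ))]
    field_simp
  have hs : Real.sqrt (γ * lam) = γ * u := by
    rw [show γ * lam = (γ * u) ^ 2 by rw [← hu2]; ring]
    exact Real.sqrt_sq (by positivity)
  have hG : GCoef N γ ρ δ lam = (lam / γ) * RCoef N γ ρ δ lam := by
    unfold GCoef RCoef dCoef
    rw [hs, ← hu, ← hu2]
    field_simp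
    ring
  have hsr : u * Real.sqrt (RCoef N γ ρ δ lam) = Real.sqrt (GCoef N γ ρ δ lam) := by
    rw [hG, Real.sqrt_mul (div_nonneg hlam.le hγ.le), ← hu]
  rw [← hsr]
  unfold h3Coef aCoef dCoef
  rw [hs, ← hu2]
  have hr0 : (0:ℝ) ≤ Real.sqrt (RCoef N γ ρ δ (γ * u ^ 2)) := Real.sqrt_nonneg _
  set r := Real.sqrt (RCoef N γ ρ δ (γ * u ^ 2)) with hrr
  field_simp
  ring

theorem h3_asymptotics
    (N : ℕ) (hN : 2 ≤ N) (γ ρ : ℝ) (hγ : 0 < γ) (hρ : 0 < ρ)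
    (δ : ℝ) (hδ0 : 0 < δ)
    (hδ : δ < Real.sqrt 2 * (N : ℝ) * Real.sqrt (((N : ℝ) - 1) / (3 * (N : ℝ) + 1))) :
    Tendsto (fun lam : ℝ => Real.sqrt (lam / γ) * h3Coef N γ ρ δ lam)
      (nhdsWithin (0 : ℝ) (Set.Ioi 0))
      (nhds (-((((N : ℝ) ^ 2 - 1) * Dbar N δ + ((N : ℝ) ^ 2 - (N : ℝ) - 1) * δ)
        / (((N : ℝ) - 1) * (N : ℝ) ^ 2)))) ∧
    (-((((N : ℝ) ^ 2 - 1) * Dbar N δ + ((N : ℝ) ^ 2 - (N : ℝ) - 1) * δ)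
        / (((N : ℝ) - 1) * (N : ℝ) ^ 2)) < 0) ∧
    (∀ᶠ lam in nhdsWithin (0 : ℝ) (Set.Ioi 0), h3Coef N γ ρ δ lam < 0) := by
  have hN2 : (2:ℝ) ≤ (N:ℝ) := by exact_mod_cast hN
  have hN0 : (N:ℝ) ≠ 0 := by nlinarith
  have hNm1 : (N:ℝ) - 1 ≠ 0 := by nlinarith
  have hNp1 : (N:ℝ) + 1 ≠ 0 := by nlinarith
  set L : ℝ := -((((N : ℝ) ^ 2 - 1) * Dbar N δ + ((N : ℝ) ^ 2 - (N : ℝ) - 1) * δ)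
        / (((N : ℝ) - 1) * (N : ℝ) ^ 2)) with hL
  -- continuity of GCoef
  have hGcont : Continuous (fun lam => GCoef N γ ρ δ lam) := by
    unfold GCoef
    fun_prop
  have hG0 : GCoef N γ ρ δ 0 = 4 * ((2 * (N : ℝ) ^ 3 - 2 * (N : ℝ) ^ 2 - (3 * (N : ℝ) + 1) * δ ^ 2)
      / (((N : ℝ) - 1) * ((N : ℝ) + 1) ^ 2)) := by
    unfold GCoef
    rw [zero_div, Real.sqrt_zero]
    field_simp
    ring
  have hsqrtG0 : Real.sqrt (GCoef N γ ρ δ 0) = 2 * Dbar N δ := by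
    rw [hG0, Real.sqrt_mul (by norm_num : (0:ℝ) ≤ 4), Dbar,
      show (4:ℝ) = 2 ^ 2 by norm_num, Real.sqrt_sq (by norm_num : (0:ℝ) ≤ 2)]
  have hGlim : Tendsto (fun lam => Real.sqrt (GCoef N γ ρ δ lam))
      (nhdsWithin (0 : ℝ) (Set.Ioi 0)) (nhds (2 * Dbar N δ)) := by
    rw [← hsqrtG0]
    exact ((Real.continuous_sqrt.comp hGcont).tendsto 0).mono_left nhdsWithin_le_nhds
  have hulim : Tendsto (fun lam : ℝ => Real.sqrt (lam / γ))
      (nhdsWithin (0 : ℝ) (Set.Ioi 0)) (nhds 0) := by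
    have : Continuous (fun lam : ℝ => Real.sqrt (lam / γ)) := by fun_prop
    have h0 : Real.sqrt ((0:ℝ) / γ) = 0 := by simp
    have := (this.tendsto 0).mono_left (nhdsWithin_le_nhds (s := Set.Ioi (0:ℝ)))
    rwa [h0] at this
  -- limit of F
  have hFlim : Tendsto (fun lam : ℝ =>
      -((((N : ℝ) ^ 2 - (N : ℝ) - 1) * δ / ((N : ℝ) - 1)
        - ((N : ℝ) + 1) * (ρ * Real.sqrt (lam / γ) - Real.sqrt (GCoef N γ ρ δ lam)) / 2)
      / (N : ℝ) ^ 2))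
      (nhdsWithin (0 : ℝ) (Set.Ioi 0)) (nhds L) := by
    have h1 := ((hulim.const_mul ρ).sub hGlim).const_mul ((N:ℝ) + 1)
    have h2 := ((tendsto_const_nhds (x := (((N : ℝ) ^ 2 - (N : ℝ) - 1) * δ / ((N : ℝ) - 1)))
        (f := nhdsWithin (0 : ℝ) (Set.Ioi 0))).sub (h1.div_const 2)).div_const ((N:ℝ)^2)
    have h3 := h2.neg
    convert h3 using 2
    rw [hL]
    field_simp
    ring
  have hmain : Tendsto (fun lam : ℝ => Real.sqrt (lam / γ) * h3Coef N γ ρ δ lam)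
      (nhdsWithin (0 : ℝ) (Set.Ioi 0)) (nhds L) := by
    refine hFlim.congr' ?_
    filter_upwards [self_mem_nhdsWithin] with lam hlam
    exact (key N hN γ ρ δ hγ lam hlam).symm
  have hDb : 0 ≤ Dbar N δ := Real.sqrt_nonneg _
  have hLneg : L < 0 := by
    rw [hL, neg_lt, neg_zero]
    apply div_pos
    · nlinarith [mul_nonneg (show (0:ℝ) ≤ (N:ℝ)^2 - 1 by nlinarith) hDb,
        mul_pos (show (0:ℝ) < (N:ℝ)^2 - (N:ℝ) - 1 by nlinarith) hδ0]
    · nlinarith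
  refine ⟨hmain, hLneg, ?_⟩
  have hev : ∀ᶠ lam in nhdsWithin (0 : ℝ) (Set.Ioi 0),
      Real.sqrt (lam / γ) * h3Coef N γ ρ δ lam < 0 :=
    hmain.eventually (eventually_lt_nhds hLneg)
  filter_upwards [hev, self_mem_nhdsWithin] with lam h1 h2
  have hu0 : 0 < Real.sqrt (lam / γ) := Real.sqrt_pos.mpr (div_pos h2 hγ)
  nlinarith
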